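/- The duality map δ: Σ* → Σ* defined by δ(ε) = ε, δ(a u) = δ(u) ā and δ(ā u) = δ(u) a for a ∈ A descends to a well-defined map on the monoid of queue actions Q = Σ*/≡; i.e., if u ≡ v then δ(u) ≡ δ(v). Moreover, δ is an involution satisfying δ(uv) = δ(v)δ(u). -/

import Mathlib

/-- A basic queue action: write a letter or read a letter. -/
inductive Act (A : Type) : Type
  | wr (a : A)
  | rd (a : A)
deriving DecidableEq

variable {A : Type} [DecidableEq A]

/-- The action of words over `Act A` on queue states `A* ∪ {⊥}` (⊥ = `none`). -/
def act : Option (List A) → List (Act A) → Option (List A)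
  | q, [] => q
  | none, _ :: _ => none
  | some q, (Act.wr a) :: u => act (some (q ++ [a])) u
  | some q, (Act.rd a) :: u =>
    match q with
    | [] => none
    | b :: q' => if b = a then act (some q') u else none

/-- Two words over `Act A` are equivalent if they act identically on all queues. -/
def qequiv (u v : List (Act A)) : Prop := ∀ q : List A, act (some q) u = act (some q) v

/-- Writing the word `w`. -/
def W (w : List A) : List (Act A) := w.map Act.wr

/-- Reading the word `w` (the barred copy of `w`). -/
def R (w : List A) : List (Act A) := w.map Act.rd

/-- `shuffle s` is the word `s₁ s̄₁ s₂ s̄₂ … sₖ s̄ₖ`. -/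
def shuffle (s : List A) : List (Act A) := s.flatMap fun a => [Act.wr a, Act.rd a]

/-- The projection to write letters. -/
def prW (w : List (Act A)) : List A :=
  w.filterMap fun x => match x with | Act.wr a => some a | Act.rd _ => none

/-- The projection to read letters (with the bars removed). -/
def prR (w : List (Act A)) : List A :=
  w.filterMap fun x => match x with | Act.wr _ => none | Act.rd a => some a

theorem act_append (u v : List (Act A)) : ∀ q, act q (u ++ v) = act (act q u) v := by
  induction u with
  | nil =>
      intro q
      cases q <;> rfl
  | cons x u ih =>
      intro q
      cases q with
      | none =>
          simp only [List.cons_append, act]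
          cases v with
          | nil => rfl
          | cons _ _ => rfl
      | some q =>
          cases x with
          | wr a => simpa [act] using ih _
          | rd a =>
              cases q with
              | nil =>
                  simp only [List.cons_append, act]
                  cases v with
                  | nil => rfl
                  | cons _ _ => rfl
              | cons b q' =>
                  by_cases h : b = a
                  · simp [List.cons_append, act, h, ih]
                  · simp only [List.cons_append, act, if_neg h]
                    cases v with
                    | nil => rfl
                    | cons _ _ => rfl

/-- The setoid of queue-action equivalence. -/
def qsetoid (A : Type) [DecidableEq A] : Setoid (List (Act A)) :=
  ⟨qequiv, ⟨fun _ _ => rfl, fun h q => (h q).symm, fun h1 h2 q => (h1 q).trans (h2 q)⟩⟩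

/-- The monoid of queue actions. -/
def QAct (A : Type) [DecidableEq A] : Type := Quotient (qsetoid A)

theorem act_none : ∀ v : List (Act A), act (none : Option (List A)) v = none
  | [] => rfl
  | _ :: _ => rfl

theorem qequiv_append {u u' v v' : List (Act A)} (hu : qequiv u u') (hv : qequiv v v') :
    qequiv (u ++ v) (u' ++ v') := by
  intro q
  rw [act_append, act_append, hu q]
  cases h : act (some q) u' with
  | none => rw [act_none, act_none]
  | some q' => exact hv q'

instance : Monoid (QAct A) where
  mul := Quotient.map₂ (· ++ ·) (fun _ _ hu _ _ hv => qequiv_append hu hv)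
  one := Quotient.mk (qsetoid A) []
  mul_assoc := by
    rintro ⟨u⟩ ⟨v⟩ ⟨w⟩
    exact congrArg (Quotient.mk (qsetoid A)) (List.append_assoc u v w)
  one_mul := by
    rintro ⟨u⟩
    rfl
  mul_one := by
    rintro ⟨u⟩
    exact congrArg (Quotient.mk (qsetoid A)) (List.append_nil u)

/-- The class of a word in the monoid of queue actions. -/
def cls (w : List (Act A)) : QAct A := Quotient.mk (qsetoid A) w

theorem cls_mul (u v : List (Act A)) : cls u * cls v = cls (u ++ v) := rfl

/-- The duality map on single letters. -/
def dualAct : Act A → Act A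
  | Act.wr a => Act.rd a
  | Act.rd a => Act.wr a

/-- The duality map `δ` on words, with `δ(ε) = ε`, `δ(a u) = δ(u) ā`, `δ(ā u) = δ(u) a`. -/
def dual (w : List (Act A)) : List (Act A) := (w.map dualAct).reverse

theorem dualAct_dualAct (x : Act A) : dualAct (dualAct x) = x := by
  cases x <;> rfl

theorem dual_cons (x : Act A) (u : List (Act A)) :
    dual (x :: u) = dual u ++ [dualAct x] := by
  simp [dual]

theorem dual_act_iff (u : List (Act A)) : ∀ r r' : List A,
    act (some r) (dual u) = some r' ↔ act (some r'.reverse) u = some r.reverse := by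
  induction u with
  | nil =>
      intro r r'
      show (some r : Option (List A)) = some r' ↔ (some r'.reverse : Option (List A)) = some r.reverse
      constructor
      · rintro h; injection h with h; rw [h]
      · intro h
        injection h with h
        rw [List.reverse_inj] at h
        rw [h]
  | cons x u ih =>
      cases x with
      | wr a =>
          intro r r'
          rw [dual_cons, act_append]
          have hRHS : act (some r'.reverse) (Act.wr a :: u) = act (some ((a :: r').reverse)) u := by
            simp [act]
          rw [hRHS, ← ih r (a :: r')]
          cases h : act (some r) (dual u) with
          | none => simp [act]
          | some m =>
              cases m with
              | nil => simp [act, dualAct]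
              | cons b t =>
                  by_cases hb : b = a
                  · subst hb; simp [act, dualAct]
                  · simp [act, dualAct, hb, Ne.symm hb]
      | rd a =>
          intro r r'
          rw [dual_cons, act_append]
          cases h : act (some r) (dual u) with
          | none =>
              show act none [Act.wr a] = some r' ↔ _
              rw [act_none]
              constructor
              · intro hc; exact absurd hc (by simp)
              · intro hR
                exfalso
                -- unfold RHS
                rcases hrv : r'.reverse with _ | ⟨b, t⟩
                · rw [hrv] at hR; exact absurd hR (by simp [act])
                · rw [hrv] at hR
                  by_cases hb : b = a
                  · subst hb
                    have hR' : act (some t) u = some r.reverse := by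
                      simpa [act] using hR
                    have : act (some r) (dual u) = some t.reverse := by
                      rw [ih r t.reverse]
                      simpa using hR'
                    rw [h] at this; exact absurd this (by simp)
                  · exact absurd hR (by simp [act, hb])
          | some m =>
              show act (some m) [Act.wr a] = some r' ↔ _
              have hL : act (some m) [Act.wr a] = some (m ++ [a]) := rfl
              rw [hL]
              constructor
              · rintro ⟨rfl⟩
                have hrv : (m ++ [a]).reverse = a :: m.reverse := by simp
                rw [hrv]
                show (if a = a then act (some m.reverse) u else none) = some r.reverse
                rw [if_pos rfl]
                have := (ih r m).mp h
                simpa using this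
              · intro hR
                rcases hrv : r'.reverse with _ | ⟨b, t⟩
                · rw [hrv] at hR; exact absurd hR (by simp [act])
                · rw [hrv] at hR
                  by_cases hb : b = a
                  · have hR' : act (some t) u = some r.reverse := by
                      simpa [act, hb] using hR
                    have hm : act (some r) (dual u) = some t.reverse := by
                      rw [ih r t.reverse]
                      simpa using hR'
                    rw [h] at hm
                    have hmt : m = t.reverse := by injection hm
                    have hrev : r' = t.reverse ++ [b] := by
                      have := congrArg List.reverse hrv
                      simpa using this
                    rw [hmt, hrev, hb]
                  · exact absurd hR (by simp [act, hb])

/-- The duality map `δ` descends to the monoid of queue actions, and it is an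
anti-morphism and an involution. -/
theorem stmt13 [Fintype A] [Nontrivial A] :
    (∀ u v : List (Act A), qequiv u v → qequiv (dual u) (dual v)) ∧
    (∀ u : List (Act A), dual (dual u) = u) ∧
    (∀ u v : List (Act A), dual (u ++ v) = dual v ++ dual u) := by
  refine ⟨?_, ?_, ?_⟩
  · intro u v huv q
    cases h : act (some q) (dual u) with
    | none =>
        cases h' : act (some q) (dual v) with
        | none => rfl
        | some r' =>
            exfalso
            have := (dual_act_iff v q r').mp h'
            rw [← huv r'.reverse] at this
            have := (dual_act_iff u q r').mpr this
            rw [h] at this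
            exact absurd this (by simp)
    | some r' =>
        have := (dual_act_iff u q r').mp h
        rw [huv r'.reverse] at this
        have := (dual_act_iff v q r').mpr this
        rw [this]
  · intro u
    have hdd : dualAct ∘ dualAct = (id : Act A → Act A) := funext dualAct_dualAct
    simp [dual, List.map_map, hdd]
  · intro u v
    simp [dual]
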